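/- The matrix e := ∑_{i,j} √(λ i · λ j) • (E i j ⊗ₖ E i j) is a self-adjoint idempotent: e * e = e and eᴴ = e. (This is the Jones projection for the basic construction ℂ ⊆ (Mₙ(ℂ), tr(D·)) ⊆ Mₙ(ℂ) ⊗ Mₙ(ℂ) of Lemma 1.2.) -/

import Mathlib

open Matrix
open scoped Kronecker

lemma kron_conjT {n : ℕ} (A B : Matrix (Fin n) (Fin n) ℂ) :
    (A ⊗ₖ B)ᴴ = Aᴴ ⊗ₖ Bᴴ := by
  ext ⟨a, b⟩ ⟨c, d⟩
  simp [Matrix.conjTranspose_apply]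

lemma stdBasis_conjT {n : ℕ} (i j : Fin n) :
    (Matrix.single i j (1 : ℂ))ᴴ = Matrix.single j i (1 : ℂ) := by
  ext a b
  simp only [Matrix.conjTranspose_apply, Matrix.single]
  by_cases h1 : j = a <;> by_cases h2 : i = b <;> simp [h1, h2, and_comm]

/-- The Jones projection `e = ∑ i j, √(λ i λ j) • (E i j ⊗ₖ E i j)` for the basic
construction `ℂ ⊆ (Mₙ(ℂ), tr(D·)) ⊆ Mₙ(ℂ) ⊗ Mₙ(ℂ)` is a self-adjoint idempotent. -/
theorem jones_projection_idempotent_selfAdjoint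
    (n : ℕ) (hn : 1 ≤ n) (lam : Fin n → ℝ)
    (hpos : ∀ i, 0 < lam i) (hsum : ∑ i, lam i = 1)
    (E : Fin n → Fin n → Matrix (Fin n) (Fin n) ℂ)
    (hE : ∀ i j, E i j = Matrix.single i j (1 : ℂ))
    (e : Matrix (Fin n × Fin n) (Fin n × Fin n) ℂ)
    (he : e = ∑ i, ∑ j, ((Real.sqrt (lam i * lam j) : ℝ) : ℂ) • (E i j ⊗ₖ E i j)) :
    e * e = e ∧ eᴴ = e := by
  set c : Fin n → Fin n → ℂ := fun i j => ((Real.sqrt (lam i * lam j) : ℝ) : ℂ) with hc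
  have hprod : ∀ i j k l : Fin n,
      (E i j ⊗ₖ E i j) * (E k l ⊗ₖ E k l)
        = if j = k then E i l ⊗ₖ E i l else 0 := by
    intro i j k l
    rw [← Matrix.mul_kronecker_mul]
    by_cases h : j = k
    · subst h
      simp [hE, Matrix.single_mul_single_same]
    · simp [hE, Matrix.single_mul_single_of_ne (h := h), h]
  have hcc : ∀ i l : Fin n, ∑ j' : Fin n, c i j' * c j' l = c i l := by
    intro i l
    have step : ∀ j' : Fin n, c i j' * c j' l = (lam j' : ℂ) * c i l := by
      intro j'
      have hr : Real.sqrt (lam i * lam j') * Real.sqrt (lam j' * lam l)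
          = lam j' * Real.sqrt (lam i * lam l) := by
        rw [← Real.sqrt_mul (mul_nonneg (hpos i).le (hpos j').le)]
        have h2 : lam i * lam j' * (lam j' * lam l) = lam j' ^ 2 * (lam i * lam l) := by
          ring
        rw [h2, Real.sqrt_mul (by positivity), Real.sqrt_sq (hpos j').le]
      simp only [hc]
      rw [← Complex.ofReal_mul, hr, Complex.ofReal_mul]
    simp only [step, ← Finset.sum_mul]
    norm_cast
    rw [hsum]
    simp
  constructor
  · have expand : (∑ i, ∑ j, c i j • (E i j ⊗ₖ E i j)) *
        (∑ k, ∑ l, c k l • (E k l ⊗ₖ E k l))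
        = ∑ i, ∑ j, ∑ k, ∑ l, (c i j * c k l) • ((E i j ⊗ₖ E i j) * (E k l ⊗ₖ E k l)) := by
      simp_rw [Finset.sum_mul, Finset.mul_sum, smul_mul_assoc, mul_smul_comm, smul_smul]
    rw [he, expand]
    simp_rw [hprod, smul_ite, smul_zero]
    have h1 : ∀ i j : Fin n,
        (∑ k, ∑ l, if j = k then (c i j * c k l) • (E i l ⊗ₖ E i l) else 0)
          = ∑ l, (c i j * c j l) • (E i l ⊗ₖ E i l) := by
      intro i j
      rw [Finset.sum_comm]
      refine Finset.sum_congr rfl fun l _ => ?_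
      simp
    simp_rw [h1]
    rw [Finset.sum_congr rfl fun i _ => Finset.sum_comm]
    simp_rw [← Finset.sum_smul, hcc]
    rfl
  · rw [he]
    simp only [Matrix.conjTranspose_sum, Matrix.conjTranspose_smul, hE, kron_conjT,
      stdBasis_conjT]
    rw [Finset.sum_comm]
    refine Finset.sum_congr rfl fun j _ => Finset.sum_congr rfl fun i _ => ?_
    rw [mul_comm (lam j) (lam i)]
    congr 1
    exact Complex.conj_ofReal _
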